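/- Let H_r be a real diagonal n×n matrix with pairwise distinct diagonal entries, let H be a real diagonal n×n matrix, and let k be an orthogonal n×n matrix. Then k·H_r·kᵀ commutes with H if and only if k = l·m, where l is an orthogonal matrix commuting with H and m is a signed permutation matrix, i.e. a matrix having exactly one nonzero entry in each row and each column, with that entry equal to 1 or −1. -/

import Mathlib

lemma exists_perm_of_map_eq {n : ℕ} {α : Type*} [LinearOrder α] {f g : Fin n → α}
    (hfg : Multiset.map f Finset.univ.val = Multiset.map g Finset.univ.val) :
    ∃ σ : Equiv.Perm (Fin n), f = g ∘ σ := by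
  have hp : (List.ofFn f).Perm (List.ofFn g) := by
    rw [← Multiset.coe_eq_coe]
    simpa [Fin.univ_val_map] using hfg
  have h1 : List.ofFn (f ∘ Tuple.sort f) = List.ofFn (g ∘ Tuple.sort g) := by
    refine List.Perm.eq_of_sortedLE (Tuple.monotone_sort f).sortedLE_ofFn
      (Tuple.monotone_sort g).sortedLE_ofFn ?_
    exact (((Tuple.sort f).ofFn_comp_perm f).trans hp).trans
      ((Tuple.sort g).ofFn_comp_perm g).symm
  have h2 : f ∘ Tuple.sort f = g ∘ Tuple.sort g := List.ofFn_injective h1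
  refine ⟨(Tuple.sort f).symm.trans (Tuple.sort g), ?_⟩
  funext i
  have := congrFun h2 ((Tuple.sort f).symm i)
  simpa using this

open Polynomial in
lemma multiset_eq_of_conj {n : ℕ} (h μ : Fin n → ℝ) (k : Matrix (Fin n) (Fin n) ℝ)
    (hk : k * k.transpose = 1)
    (hD : Matrix.diagonal h = k * Matrix.diagonal μ * k.transpose) :
    Multiset.map h Finset.univ.val = Multiset.map μ Finset.univ.val := by
  classical
  set kC := k.map (C : ℝ → ℝ[X]) with hkC
  set ktC := k.transpose.map (C : ℝ → ℝ[X]) with hktC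
  have hone : kC * ktC = 1 := by
    rw [hkC, hktC, ← Matrix.map_mul (f := (C : ℝ →+* ℝ[X])), hk,
      Matrix.map_one _ (map_zero C) (map_one C)]
  have key : Matrix.diagonal (fun i => (X : ℝ[X]) - C (h i))
      = kC * Matrix.diagonal (fun p => (X : ℝ[X]) - C (μ p)) * ktC := by
    have ed : ∀ f : Fin n → ℝ, Matrix.diagonal (fun i => (X : ℝ[X]) - C (f i))
        = (X : ℝ[X]) • (1 : Matrix (Fin n) (Fin n) ℝ[X]) - (Matrix.diagonal f).map C := by
      intro f
      rw [Matrix.smul_one_eq_diagonal, Matrix.diagonal_map (map_zero C),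
        ← Matrix.diagonal_sub]
    rw [ed, ed, Matrix.mul_sub, Matrix.sub_mul, Matrix.mul_smul, Matrix.mul_one,
      Matrix.smul_mul, hone]
    congr 1
    rw [← Matrix.map_mul (f := (C : ℝ →+* ℝ[X])), ← Matrix.map_mul (f := (C : ℝ →+* ℝ[X])),
      ← hD]
  have hdet : ∏ i, ((X : ℝ[X]) - C (h i)) = ∏ p, ((X : ℝ[X]) - C (μ p)) := by
    have := congrArg Matrix.det key
    rw [Matrix.det_diagonal, Matrix.det_mul, Matrix.det_mul, mul_comm,
      ← mul_assoc, ← Matrix.det_mul, mul_eq_one_comm.mp hone,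
      Matrix.det_one, one_mul, Matrix.det_diagonal] at this
    exact this
  have r1 := Polynomial.roots_multiset_prod_X_sub_C (Multiset.map h Finset.univ.val)
  have r2 := Polynomial.roots_multiset_prod_X_sub_C (Multiset.map μ Finset.univ.val)
  rw [Multiset.map_map] at r1 r2
  rw [← r1, ← r2]
  congr 1

/-- Classification of critical points: for `H_r` diagonal with pairwise distinct entries,
`H` diagonal, and `k` orthogonal, `k·H_r·kᵀ` commutes with `H` iff `k = l·m` with `l`
orthogonal commuting with `H` and `m` a signed permutation matrix. -/
theorem commutes_iff_centralizer_times_signed_permutation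
    {n : ℕ} (d h : Fin n → ℝ) (hd : Function.Injective d)
    (k : Matrix (Fin n) (Fin n) ℝ) (hk : k * k.transpose = 1) :
    (k * Matrix.diagonal d * k.transpose) * Matrix.diagonal h
      = Matrix.diagonal h * (k * Matrix.diagonal d * k.transpose)
    ↔ ∃ l m : Matrix (Fin n) (Fin n) ℝ,
        l * l.transpose = 1 ∧
        l * Matrix.diagonal h = Matrix.diagonal h * l ∧
        (∀ i : Fin n, ∃! j : Fin n, m i j ≠ 0) ∧
        (∀ j : Fin n, ∃! i : Fin n, m i j ≠ 0) ∧
        (∀ i j : Fin n, m i j ≠ 0 → m i j = 1 ∨ m i j = -1) ∧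
        k = l * m := by
  classical
  have kt : k.transpose * k = 1 := mul_eq_one_comm.mp hk
  have hk' : ∀ x : Matrix (Fin n) (Fin n) ℝ, k * (k.transpose * x) = x := by
    intro x; rw [← Matrix.mul_assoc, hk, Matrix.one_mul]
  have kt' : ∀ x : Matrix (Fin n) (Fin n) ℝ, k.transpose * (k * x) = x := by
    intro x; rw [← Matrix.mul_assoc, kt, Matrix.one_mul]
  constructor
  · intro hc
    set B := k.transpose * (Matrix.diagonal h * k) with hBdef
    have hB : Matrix.diagonal d * B = B * Matrix.diagonal d := by
      have := congrArg (fun X => k.transpose * X * k) hc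
      simp only [Matrix.mul_assoc, kt', hk', kt, hk, Matrix.mul_one] at this
      simp only [hBdef, Matrix.mul_assoc]
      exact this
    have hB0 : ∀ i j, i ≠ j → B i j = 0 := by
      intro i j hij
      have := congrFun (congrFun hB i) j
      rw [Matrix.diagonal_mul, Matrix.mul_diagonal] at this
      have hdd : d i ≠ d j := fun e => hij (hd e)
      have : B i j * (d i - d j) = 0 := by ring_nf; linarith [this]
      rcases mul_eq_zero.mp this with h1 | h2
      · exact h1
      · exact absurd (sub_eq_zero.mp h2) hdd
    set μ : Fin n → ℝ := fun p => B p p with hμdef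
    have hBdiag : B = Matrix.diagonal μ := by
      ext i j
      by_cases hij : i = j
      · subst hij; simp [Matrix.diagonal_apply_eq, hμdef]
      · rw [Matrix.diagonal_apply_ne _ hij]; exact hB0 i j hij
    have hDk : Matrix.diagonal h * k = k * Matrix.diagonal μ := by
      have := congrArg (fun X => k * X) hBdiag
      simpa only [hBdef, hk'] using this
    have hev : ∀ i p, h i * k i p = k i p * μ p := by
      intro i p
      have := congrFun (congrFun hDk i) p
      rwa [Matrix.diagonal_mul, Matrix.mul_diagonal] at this
    have hD2 : Matrix.diagonal h = k * Matrix.diagonal μ * k.transpose := by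
      have := congrArg (fun X => X * k.transpose) hDk
      simpa only [Matrix.mul_assoc, hk, Matrix.mul_one] using this
    obtain ⟨σ, hσ⟩ := exists_perm_of_map_eq (multiset_eq_of_conj h μ k hk hD2)
    -- h = μ ∘ σ
    refine ⟨Matrix.of (fun i q => k i (σ q)),
      Matrix.of (fun p j => if σ p = j then (1 : ℝ) else 0), ?_, ?_, ?_, ?_, ?_, ?_⟩
    · ext i i'
      have := congrFun (congrFun hk i) i'
      rw [Matrix.mul_apply] at this
      rw [Matrix.mul_apply]
      rw [← this]
      simp only [Matrix.transpose_apply, Matrix.of_apply]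
      exact Fintype.sum_equiv σ _ _ (fun q => rfl)
    · ext i q
      rw [Matrix.mul_diagonal, Matrix.diagonal_mul]
      simp only [Matrix.of_apply]
      by_cases hz : k i (σ q) = 0
      · rw [hz]; ring
      · have h1 : h i = μ (σ q) := by
          have h2 := hev i (σ q)
          rw [mul_comm (k i (σ q))] at h2
          exact mul_right_cancel₀ hz h2
        have h3 : h q = μ (σ q) := congrFun hσ q
        rw [h1, h3]
        ring
    · intro p
      refine ⟨σ p, by simp, fun j hj => ?_⟩
      by_contra hne
      apply hj
      simp only [Matrix.of_apply]
      rw [if_neg]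
      intro e
      exact hne e.symm
    · intro j
      refine ⟨σ.symm j, by simp, fun p hp => ?_⟩
      by_contra hne
      apply hp
      have : σ p ≠ j := fun e => hne (by rw [← e, Equiv.symm_apply_apply])
      simp only [Matrix.of_apply, if_neg this]
    · intro p j hne
      simp only [Matrix.of_apply] at hne ⊢
      by_cases e : σ p = j
      · left; simp [e]
      · exact absurd (by simp [e]) hne
    · ext i j
      rw [Matrix.mul_apply]
      simp only [Matrix.of_apply, mul_ite, mul_one, mul_zero]
      rw [show (∑ q, if σ q = j then k i (σ q) else 0)
          = ∑ q', if q' = j then k i q' else 0 from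
        Fintype.sum_equiv σ _ _ (fun q => rfl)]
      simp
  · rintro ⟨l, m, hl, hlD, _, hcol, _, hklm⟩
    set E := m * Matrix.diagonal d * m.transpose with hEdef
    have hE0 : ∀ i q, i ≠ q → E i q = 0 := by
      intro i q hiq
      rw [hEdef, Matrix.mul_apply]
      refine Finset.sum_eq_zero fun p _ => ?_
      rw [Matrix.mul_diagonal, Matrix.transpose_apply]
      by_cases h1 : m i p = 0
      · rw [h1]; ring
      · by_cases h2 : m q p = 0
        · rw [h2]; ring
        · obtain ⟨u, _, hu⟩ := hcol p
          exact absurd ((hu i h1).trans (hu q h2).symm) hiq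
    have hED : E * Matrix.diagonal h = Matrix.diagonal h * E := by
      ext i q
      rw [Matrix.mul_diagonal, Matrix.diagonal_mul]
      by_cases hiq : i = q
      · subst hiq; ring
      · rw [hE0 i q hiq]; ring
    have hltD : l.transpose * Matrix.diagonal h = Matrix.diagonal h * l.transpose := by
      have := congrArg Matrix.transpose hlD
      rw [Matrix.transpose_mul, Matrix.transpose_mul, Matrix.diagonal_transpose] at this
      exact this.symm
    have hA : k * Matrix.diagonal d * k.transpose = l * (E * l.transpose) := by
      rw [hklm, hEdef]
      simp only [Matrix.transpose_mul, Matrix.mul_assoc]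
    rw [hA]
    calc l * (E * l.transpose) * Matrix.diagonal h
        = l * (E * (l.transpose * Matrix.diagonal h)) := by
          simp only [Matrix.mul_assoc]
      _ = l * (E * (Matrix.diagonal h * l.transpose)) := by rw [hltD]
      _ = l * ((E * Matrix.diagonal h) * l.transpose) := by
          simp only [Matrix.mul_assoc]
      _ = l * ((Matrix.diagonal h * E) * l.transpose) := by rw [hED]
      _ = (l * Matrix.diagonal h) * (E * l.transpose) := by
          simp only [Matrix.mul_assoc]
      _ = (Matrix.diagonal h * l) * (E * l.transpose) := by rw [hlD]
      _ = Matrix.diagonal h * (l * (E * l.transpose)) := by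
          simp only [Matrix.mul_assoc]
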